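/- If two values P(t₁) and P(t₂) of the corrected divergence curve are known at distinct times t₁ ≠ t₂ (both > 0), then the parameters μ > 0 and h₀ ∈ [0,(r-1)/r) are uniquely determined; i.e., the map (μ,h₀) ↦ (P(t₁),P(t₂)) is injective. -/

import Mathlib

theorem stmt_16 (r : ℕ) (hr : 2 ≤ r) (t₁ t₂ : ℝ) (ht₁ : 0 < t₁) (ht : t₁ < t₂)
    (μ μ' h₀ h₀' : ℝ) (hμ : 0 < μ) (hμ' : 0 < μ')
    (hh0 : 0 ≤ h₀) (hh1 : h₀ < (r - 1) / r)
    (hh0' : 0 ≤ h₀') (hh1' : h₀' < (r - 1) / r)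
    (h1 : h₀ * Real.exp (-(r * μ * t₁) / (r - 1))
        + ((r - 1) / r) * (1 - Real.exp (-(r * μ * t₁) / (r - 1)))
      = h₀' * Real.exp (-(r * μ' * t₁) / (r - 1))
        + ((r - 1) / r) * (1 - Real.exp (-(r * μ' * t₁) / (r - 1))))
    (h2 : h₀ * Real.exp (-(r * μ * t₂) / (r - 1))
        + ((r - 1) / r) * (1 - Real.exp (-(r * μ * t₂) / (r - 1)))
      = h₀' * Real.exp (-(r * μ' * t₂) / (r - 1))
        + ((r - 1) / r) * (1 - Real.exp (-(r * μ' * t₂) / (r - 1)))) :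
    μ = μ' ∧ h₀ = h₀' := by
  have hr2 : (2:ℝ) ≤ (r:ℝ) := by exact_mod_cast hr
  have hr1 : (0:ℝ) < (r:ℝ) - 1 := by linarith
  have hrne : ((r:ℝ) - 1) ≠ 0 := ne_of_gt hr1
  set c : ℝ := ((r:ℝ) - 1) / r with hc
  set E₁ := Real.exp (-(r * μ * t₁) / (r - 1)) with hE₁
  set E₂ := Real.exp (-(r * μ * t₂) / (r - 1)) with hE₂
  set F₁ := Real.exp (-(r * μ' * t₁) / (r - 1)) with hF₁
  set F₂ := Real.exp (-(r * μ' * t₂) / (r - 1)) with hF₂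
  have hA : h₀ - c ≠ 0 := ne_of_lt (sub_neg.mpr hh1)
  have hA' : h₀' - c ≠ 0 := ne_of_lt (sub_neg.mpr hh1')
  have e1 : (h₀ - c) * E₁ = (h₀' - c) * F₁ := by linear_combination h1
  have e2 : (h₀ - c) * E₂ = (h₀' - c) * F₂ := by linear_combination h2
  have prod : (h₀ - c) * (h₀' - c) * (E₁ * F₂) = (h₀ - c) * (h₀' - c) * (F₁ * E₂) := by
    linear_combination ((h₀' - c) * F₂) * e1 - ((h₀' - c) * F₁) * e2
  have key : E₁ * F₂ = F₁ * E₂ :=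
    mul_left_cancel₀ (mul_ne_zero hA hA') prod
  rw [hE₁, hE₂, hF₁, hF₂, ← Real.exp_add, ← Real.exp_add] at key
  have keq := Real.exp_injective key
  have keq2 : -(r * μ * t₁) + -(r * μ' * t₂) = -(r * μ' * t₁) + -(r * μ * t₂) := by
    field_simp at keq
    apply mul_right_cancel₀ hrne
    linear_combination ((r:ℝ) * ((r:ℝ) - 1)) * keq
  have h3 : (μ - μ') * ((r:ℝ) * (t₂ - t₁)) = 0 := by linear_combination keq2
  have hrt : ((r:ℝ) * (t₂ - t₁)) ≠ 0 := ne_of_gt (mul_pos (by linarith) (by linarith))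
  have hμeq : μ = μ' := by
    rcases mul_eq_zero.mp h3 with h | h
    · linarith
    · exact absurd h hrt
  refine ⟨hμeq, ?_⟩
  subst hμeq
  have hEF : E₁ = F₁ := by rw [hE₁, hF₁]
  rw [hEF] at e1
  have hF₁ne : F₁ ≠ 0 := Real.exp_ne_zero _
  have := mul_right_cancel₀ hF₁ne e1
  linarith
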